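/- Under the setup of the previous lemma (code-functions F^n, feedback Z^n, with all stated Markov assumptions), I(F^n; Y^n) ≤ I(X^n → Y^n ‖ Z^n); i.e., the causal conditional directed information is an upper bound on the mutual information between code-functions and channel outputs. -/

import Mathlib

open Finset

namespace NFB

variable {Ω : Type*} [Fintype Ω]

/-- Probability that the finite random variable `X` (on finite sample space `Ω`
with weights `μ`) takes the value `a`. -/
noncomputable def pr (μ : Ω → ℝ) {α : Type*} [Fintype α] [DecidableEq α]
    (X : Ω → α) (a : α) : ℝ :=
  ∑ ω ∈ Finset.univ.filter (fun ω => X ω = a), μ ω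

/-- Conditional probability `p(X = a | Y = b)`. -/
noncomputable def condpr (μ : Ω → ℝ) {α β : Type*} [Fintype α] [DecidableEq α]
    [Fintype β] [DecidableEq β] (X : Ω → α) (Y : Ω → β) (a : α) (b : β) : ℝ :=
  pr μ (fun ω => (X ω, Y ω)) (a, b) / pr μ Y b

/-- Shannon entropy (base 2) of a finite random variable. -/
noncomputable def ent (μ : Ω → ℝ) {α : Type*} [Fintype α] [DecidableEq α]
    (X : Ω → α) : ℝ :=
  ∑ a : α, -(pr μ X a * Real.logb 2 (pr μ X a))

/-- Shannon entropy (base 2) of a distribution given directly as a weight function. -/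
noncomputable def entD {γ : Type*} [Fintype γ] (p : γ → ℝ) : ℝ :=
  ∑ c : γ, -(p c * Real.logb 2 (p c))

/-- Binary entropy function (base 2). -/
noncomputable def binent (a : ℝ) : ℝ :=
  -(a * Real.logb 2 a) - ((1 - a) * Real.logb 2 (1 - a))

/-- Conditional entropy `H(X | Y)`. -/
noncomputable def condent (μ : Ω → ℝ) {α β : Type*} [Fintype α] [DecidableEq α]
    [Fintype β] [DecidableEq β] (X : Ω → α) (Y : Ω → β) : ℝ :=
  ent μ (fun ω => (X ω, Y ω)) - ent μ Y

/-- Mutual information `I(X; Y)`. -/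
noncomputable def mi (μ : Ω → ℝ) {α β : Type*} [Fintype α] [DecidableEq α]
    [Fintype β] [DecidableEq β] (X : Ω → α) (Y : Ω → β) : ℝ :=
  ent μ X + ent μ Y - ent μ (fun ω => (X ω, Y ω))

/-- Conditional mutual information `I(X; Y | Z)`. -/
noncomputable def cmi (μ : Ω → ℝ) {α β γ : Type*} [Fintype α] [DecidableEq α]
    [Fintype β] [DecidableEq β] [Fintype γ] [DecidableEq γ]
    (X : Ω → α) (Y : Ω → β) (Z : Ω → γ) : ℝ :=
  condent μ X Z + condent μ Y Z - condent μ (fun ω => (X ω, Y ω)) Z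

/-- The length-`i` prefix of a sequence `x : Fin n → α`. -/
def pfx {α : Type*} {n : ℕ} (x : Fin n → α) (i : ℕ) (h : i ≤ n) : Fin i → α :=
  fun j => x (Fin.castLE h j)

/-- Directed information `I(Xⁿ → Yⁿ) = ∑ᵢ I(Xⁱ; Yᵢ | Yⁱ⁻¹)`. -/
noncomputable def dirinfo (μ : Ω → ℝ) {α β : Type*} [Fintype α] [DecidableEq α]
    [Fintype β] [DecidableEq β] {n : ℕ} (X : Ω → Fin n → α) (Y : Ω → Fin n → β) : ℝ :=
  ∑ i : Fin n, cmi μ (fun ω => pfx (X ω) (i.1 + 1) i.isLt)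
    (fun ω => Y ω i) (fun ω => pfx (Y ω) i.1 i.isLt.le)

/-- Conditional directed information `I(Xⁿ → Yⁿ | W) = ∑ᵢ I(Xⁱ; Yᵢ | Yⁱ⁻¹, W)`. -/
noncomputable def dirinfoCond (μ : Ω → ℝ) {α β γ : Type*} [Fintype α] [DecidableEq α]
    [Fintype β] [DecidableEq β] [Fintype γ] [DecidableEq γ]
    {n : ℕ} (X : Ω → Fin n → α) (Y : Ω → Fin n → β) (W : Ω → γ) : ℝ :=
  ∑ i : Fin n, cmi μ (fun ω => pfx (X ω) (i.1 + 1) i.isLt)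
    (fun ω => Y ω i) (fun ω => (pfx (Y ω) i.1 i.isLt.le, W ω))

/-- Causal conditional directed information
`I(Xⁿ → Yⁿ ‖ Zⁿ) = ∑ᵢ I(Xⁱ; Yᵢ | Yⁱ⁻¹, Zⁱ⁻¹)`. -/
noncomputable def dirinfoCausal (μ : Ω → ℝ) {α β γ : Type*} [Fintype α] [DecidableEq α]
    [Fintype β] [DecidableEq β] [Fintype γ] [DecidableEq γ]
    {n : ℕ} (X : Ω → Fin n → α) (Y : Ω → Fin n → β) (Z : Ω → Fin n → γ) : ℝ :=
  ∑ i : Fin n, cmi μ (fun ω => pfx (X ω) (i.1 + 1) i.isLt)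
    (fun ω => Y ω i) (fun ω => (pfx (Y ω) i.1 i.isLt.le, pfx (Z ω) i.1 i.isLt.le))

/-- Directed information from feedback to outputs
`I(Zⁿ⁻¹ → Yⁿ) = ∑ᵢ I(Zⁱ⁻¹; Yᵢ | Yⁱ⁻¹)`. -/
noncomputable def fbinfo (μ : Ω → ℝ) {ζ β : Type*} [Fintype ζ] [DecidableEq ζ]
    [Fintype β] [DecidableEq β] {n : ℕ} (Z : Ω → Fin n → ζ) (Y : Ω → Fin n → β) : ℝ :=
  ∑ i : Fin n, cmi μ (fun ω => pfx (Z ω) i.1 i.isLt.le)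
    (fun ω => Y ω i) (fun ω => pfx (Y ω) i.1 i.isLt.le)


set_option synthInstance.maxSize 1000

lemma pr_nonneg (μ : Ω → ℝ) (hμ0 : ∀ ω, 0 ≤ μ ω) {α : Type*} [Fintype α] [DecidableEq α]
    (X : Ω → α) (a : α) : 0 ≤ pr μ X a :=
  Finset.sum_nonneg fun ω _ => hμ0 ω

lemma sum_pr (μ : Ω → ℝ) {α : Type*} [Fintype α] [DecidableEq α] (X : Ω → α) :
    ∑ a, pr μ X a = ∑ ω, μ ω :=
  Finset.sum_fiberwise _ _ _

lemma pr_comp_inj (μ : Ω → ℝ) {α β : Type*} [Fintype α] [DecidableEq α]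
    [Fintype β] [DecidableEq β] (f : α → β) (hf : Function.Injective f)
    (X : Ω → α) (a : α) :
    pr μ (fun ω => f (X ω)) (f a) = pr μ X a := by
  unfold pr
  congr 1
  ext ω
  simp [hf.eq_iff]

lemma pr_comp_zero (μ : Ω → ℝ) {α β : Type*} [Fintype α] [DecidableEq α]
    [Fintype β] [DecidableEq β] (f : α → β) (X : Ω → α) (b : β)
    (hb : ∀ a, f a ≠ b) :
    pr μ (fun ω => f (X ω)) b = 0 := by
  unfold pr
  rw [Finset.filter_false_of_mem fun ω _ => hb (X ω), Finset.sum_empty]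

lemma ent_comp_inj (μ : Ω → ℝ) {α β : Type*} [Fintype α] [DecidableEq α]
    [Fintype β] [DecidableEq β] (f : α → β) (hf : Function.Injective f)
    (X : Ω → α) :
    ent μ (fun ω => f (X ω)) = ent μ X := by
  unfold ent
  rw [← Finset.sum_subset (Finset.subset_univ (Finset.univ.image f))
    (fun b _ hb => by
      rw [pr_comp_zero μ f X b fun a hab => hb (Finset.mem_image.2 ⟨a, Finset.mem_univ a, hab⟩)]
      simp)]
  rw [Finset.sum_image (fun x _ y _ h => hf h)]
  exact Finset.sum_congr rfl fun a _ => by rw [pr_comp_inj μ f hf]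

lemma ent_eq (μ : Ω → ℝ) {α β : Type*} [Fintype α] [DecidableEq α]
    [Fintype β] [DecidableEq β] (A : Ω → α) (B : Ω → β) (f : α → β) (g : β → α)
    (hf : ∀ ω, f (A ω) = B ω) (hg : ∀ ω, g (B ω) = A ω) :
    ent μ A = ent μ B := by
  have h1 : ent μ (fun ω => (A ω, B ω)) = ent μ A := by
    have he : (fun ω => (A ω, B ω)) = fun ω => ((fun a => (a, f a)) (A ω)) := by
      funext ω; simp [hf ω]
    rw [he]
    exact ent_comp_inj μ (fun a => (a, f a)) (fun x y h => congrArg Prod.fst h) A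
  have h2 : ent μ (fun ω => (A ω, B ω)) = ent μ B := by
    have he : (fun ω => (A ω, B ω)) = fun ω => ((fun b => (g b, b)) (B ω)) := by
      funext ω; simp [hg ω]
    rw [he]
    exact ent_comp_inj μ (fun b => (g b, b)) (fun x y h => congrArg Prod.snd h) B
  linarith

lemma pr_eq_sum_pair (μ : Ω → ℝ) {α β : Type*} [Fintype α] [DecidableEq α]
    [Fintype β] [DecidableEq β] (U : Ω → α) (V : Ω → β) (a : α) :
    pr μ U a = ∑ b, pr μ (fun ω => (U ω, V ω)) (a, b) := by
  unfold pr
  rw [← Finset.sum_fiberwise (Finset.univ.filter fun ω => U ω = a) V μ]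
  refine Finset.sum_congr rfl fun b _ => ?_
  congr 1
  ext ω
  simp [Prod.ext_iff, and_comm]

lemma pr_comp_sum (μ : Ω → ℝ) {δ ε : Type*} [Fintype δ] [DecidableEq δ]
    [Fintype ε] [DecidableEq ε] (W : Ω → δ) (g : δ → ε) (e : ε) :
    pr μ (fun ω => g (W ω)) e = ∑ d ∈ Finset.univ.filter (fun d => g d = e), pr μ W d := by
  have key : ∀ d : δ, (∑ ω ∈ Finset.univ.filter (fun ω => W ω = d),
      (if g (W ω) = e then μ ω else 0)) = (if g d = e then pr μ W d else 0) := by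
    intro d
    by_cases hd : g d = e
    · simp only [hd, if_true]
      exact Finset.sum_congr rfl fun ω hω => by
        rw [(Finset.mem_filter.1 hω).2, hd, if_pos rfl]
    · simp only [hd, if_false]
      exact Finset.sum_eq_zero fun ω hω => by
        rw [(Finset.mem_filter.1 hω).2, if_neg hd]
  calc pr μ (fun ω => g (W ω)) e
      = ∑ ω, if g (W ω) = e then μ ω else 0 := by
        unfold pr; rw [Finset.sum_filter]
    _ = ∑ d : δ, ∑ ω ∈ Finset.univ.filter (fun ω => W ω = d),
          (if g (W ω) = e then μ ω else 0) := (Finset.sum_fiberwise _ _ _).symm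
    _ = ∑ d : δ, if g d = e then pr μ W d else 0 := Finset.sum_congr rfl fun d _ => key d
    _ = ∑ d ∈ Finset.univ.filter (fun d => g d = e), pr μ W d := (Finset.sum_filter _ _).symm

lemma ent_comp_expand (μ : Ω → ℝ) {δ ε : Type*} [Fintype δ] [DecidableEq δ]
    [Fintype ε] [DecidableEq ε] (W : Ω → δ) (g : δ → ε) :
    ent μ (fun ω => g (W ω))
      = -∑ d, pr μ W d * Real.logb 2 (pr μ (fun ω => g (W ω)) (g d)) := by
  calc ent μ (fun ω => g (W ω))
      = ∑ e, -(pr μ (fun ω => g (W ω)) e * Real.logb 2 (pr μ (fun ω => g (W ω)) e)) := rfl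
    _ = ∑ e, ∑ d ∈ Finset.univ.filter (fun d => g d = e),
          -(pr μ W d * Real.logb 2 (pr μ (fun ω => g (W ω)) (g d))) := by
        refine Finset.sum_congr rfl fun e _ => ?_
        rw [show (∑ d ∈ Finset.univ.filter (fun d => g d = e),
            -(pr μ W d * Real.logb 2 (pr μ (fun ω => g (W ω)) (g d))))
          = ∑ d ∈ Finset.univ.filter (fun d => g d = e),
            -(pr μ W d * Real.logb 2 (pr μ (fun ω => g (W ω)) e)) from
          Finset.sum_congr rfl fun d hd => by rw [(Finset.mem_filter.1 hd).2]]
        rw [Finset.sum_neg_distrib, ← Finset.sum_mul, ← pr_comp_sum μ W g e]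
    _ = ∑ d, -(pr μ W d * Real.logb 2 (pr μ (fun ω => g (W ω)) (g d))) :=
        Finset.sum_fiberwise _ _ _
    _ = -∑ d, pr μ W d * Real.logb 2 (pr μ (fun ω => g (W ω)) (g d)) := by
        rw [Finset.sum_neg_distrib]

lemma gibbs {ι : Type*} [Fintype ι] (p q : ι → ℝ) (hp0 : ∀ i, 0 ≤ p i)
    (hq0 : ∀ i, 0 ≤ q i) (hpos : ∀ i, 0 < p i → 0 < q i)
    (hle : ∑ i, q i ≤ ∑ i, p i) :
    ∑ i, p i * Real.logb 2 (q i / p i) ≤ 0 := by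
  have key : ∀ i, p i * Real.log (q i / p i) ≤ q i - p i := by
    intro i
    rcases (hp0 i).lt_or_eq with h | h
    · have hq := hpos i h
      have hlog := Real.log_le_sub_one_of_pos (div_pos hq h)
      have h2 : p i * Real.log (q i / p i) ≤ p i * (q i / p i - 1) := by nlinarith
      have h3 : p i * (q i / p i - 1) = q i - p i := by field_simp
      linarith
    · rw [← h]; simpa using hq0 i
  have h1 : ∑ i, p i * Real.log (q i / p i) ≤ 0 := by
    calc ∑ i, p i * Real.log (q i / p i) ≤ ∑ i, (q i - p i) :=
          Finset.sum_le_sum fun i _ => key i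
      _ = ∑ i, q i - ∑ i, p i := Finset.sum_sub_distrib _ _
      _ ≤ 0 := by linarith
  have h2 : ∑ i, p i * Real.logb 2 (q i / p i)
      = (∑ i, p i * Real.log (q i / p i)) / Real.log 2 := by
    rw [Finset.sum_div]
    exact Finset.sum_congr rfl fun i _ => by rw [Real.logb]; ring
  rw [h2]
  exact div_nonpos_of_nonpos_of_nonneg h1 (Real.log_pos one_lt_two).le

lemma cmi_nonneg (μ : Ω → ℝ) (hμ0 : ∀ ω, 0 ≤ μ ω) (hμ1 : ∑ ω, μ ω = 1)
    {α β γ : Type*} [Fintype α] [DecidableEq α] [Fintype β] [DecidableEq β]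
    [Fintype γ] [DecidableEq γ] (A : Ω → α) (B : Ω → β) (C : Ω → γ) :
    0 ≤ cmi μ A B C := by
  classical
  set T : Ω → (α × β) × γ := fun ω => ((A ω, B ω), C ω) with hT
  let p : (α × β) × γ → ℝ := pr μ T
  let PAC : α × γ → ℝ := pr μ (fun ω => (A ω, C ω))
  let PBC : β × γ → ℝ := pr μ (fun ω => (B ω, C ω))
  let PC : γ → ℝ := pr μ C
  have hp0 : ∀ t, 0 ≤ p t := fun t => pr_nonneg μ hμ0 T t
  have hPAC0 : ∀ u, 0 ≤ PAC u := fun u => pr_nonneg μ hμ0 _ u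
  have hPBC0 : ∀ u, 0 ≤ PBC u := fun u => pr_nonneg μ hμ0 _ u
  have hPC0 : ∀ c, 0 ≤ PC c := fun c => pr_nonneg μ hμ0 _ c
  have hp1 : ∑ t, p t = 1 := by rw [show (∑ t, p t) = ∑ t, pr μ T t from rfl, sum_pr, hμ1]
  -- marginals via pr_comp_sum
  have hACm : ∀ t : (α × β) × γ, PAC (t.1.1, t.2)
      = ∑ d ∈ Finset.univ.filter (fun d : (α × β) × γ => (d.1.1, d.2) = (t.1.1, t.2)), p d :=
    fun t => pr_comp_sum μ T (fun d => (d.1.1, d.2)) (t.1.1, t.2)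
  have hBCm : ∀ t : (α × β) × γ, PBC (t.1.2, t.2)
      = ∑ d ∈ Finset.univ.filter (fun d : (α × β) × γ => (d.1.2, d.2) = (t.1.2, t.2)), p d :=
    fun t => pr_comp_sum μ T (fun d => (d.1.2, d.2)) (t.1.2, t.2)
  have hCm : ∀ t : (α × β) × γ, PC t.2
      = ∑ d ∈ Finset.univ.filter (fun d : (α × β) × γ => d.2 = t.2), p d :=
    fun t => pr_comp_sum μ T (fun d => d.2) t.2
  -- pointwise domination
  have hlePAC : ∀ t, p t ≤ PAC (t.1.1, t.2) := by
    intro t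
    rw [hACm t]
    exact Finset.single_le_sum (fun d _ => hp0 d) (by simp)
  have hlePBC : ∀ t, p t ≤ PBC (t.1.2, t.2) := by
    intro t
    rw [hBCm t]
    exact Finset.single_le_sum (fun d _ => hp0 d) (by simp)
  have hlePC : ∀ t, p t ≤ PC t.2 := by
    intro t
    rw [hCm t]
    exact Finset.single_le_sum (fun d _ => hp0 d) (by simp)
  -- entropy expansions
  have eT : ent μ T = -∑ t, p t * Real.logb 2 (p t) := by
    have := ent_comp_expand μ T (fun d => d)
    simpa using this
  have eAC : ent μ (fun ω => (A ω, C ω)) = -∑ t, p t * Real.logb 2 (PAC (t.1.1, t.2)) :=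
    ent_comp_expand μ T (fun d => (d.1.1, d.2))
  have eBC : ent μ (fun ω => (B ω, C ω)) = -∑ t, p t * Real.logb 2 (PBC (t.1.2, t.2)) :=
    ent_comp_expand μ T (fun d => (d.1.2, d.2))
  have eC : ent μ C = -∑ t, p t * Real.logb 2 (PC t.2) :=
    ent_comp_expand μ T (fun d => d.2)
  -- q
  let q : (α × β) × γ → ℝ := fun t => PAC (t.1.1, t.2) * PBC (t.1.2, t.2) / PC t.2
  have hq0 : ∀ t, 0 ≤ q t := fun t =>
    div_nonneg (mul_nonneg (hPAC0 _) (hPBC0 _)) (hPC0 _)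
  have hqpos : ∀ t, 0 < p t → 0 < q t := by
    intro t ht
    exact div_pos (mul_pos (lt_of_lt_of_le ht (hlePAC t)) (lt_of_lt_of_le ht (hlePBC t)))
      (lt_of_lt_of_le ht (hlePC t))
  -- column sums of marginals
  have hSA : ∀ c, ∑ a, PAC (a, c) = PC c := by
    intro c
    have h1 : PC c = ∑ a, pr μ (fun ω => (C ω, A ω)) (c, a) :=
      pr_eq_sum_pair μ C A c
    have h2 : ∀ a, pr μ (fun ω => (C ω, A ω)) (c, a) = PAC (a, c) := fun a =>
      pr_comp_inj μ (fun u : α × γ => (u.2, u.1)) (fun x y h => by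
        cases x; cases y; simpa [Prod.ext_iff, and_comm] using h)
        (fun ω => (A ω, C ω)) (a, c)
    rw [h1]
    exact (Finset.sum_congr rfl fun a _ => h2 a).symm ▸ rfl
  have hSB : ∀ c, ∑ b, PBC (b, c) = PC c := by
    intro c
    have h1 : PC c = ∑ b, pr μ (fun ω => (C ω, B ω)) (c, b) :=
      pr_eq_sum_pair μ C B c
    have h2 : ∀ b, pr μ (fun ω => (C ω, B ω)) (c, b) = PBC (b, c) := fun b =>
      pr_comp_inj μ (fun u : β × γ => (u.2, u.1)) (fun x y h => by
        cases x; cases y; simpa [Prod.ext_iff, and_comm] using h)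
        (fun ω => (B ω, C ω)) (b, c)
    rw [h1]
    exact (Finset.sum_congr rfl fun b _ => h2 b).symm ▸ rfl
  have hPCsum : ∑ c, PC c = 1 := by
    rw [show (∑ c, PC c) = ∑ c, pr μ C c from rfl, sum_pr, hμ1]
  -- sum of q ≤ 1
  have hqsum : ∑ t, q t ≤ ∑ t, p t := by
    rw [hp1]
    have hcol : ∀ c : γ, (∑ x : α × β, q (x, c)) ≤ PC c := by
      intro c
      by_cases hc : PC c = 0
      · have hzero : ∀ a, PAC (a, c) = 0 := by
          intro a
          have hsum : ∑ a, PAC (a, c) = 0 := by rw [hSA c, hc]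
          exact le_antisymm (hsum ▸ Finset.single_le_sum
            (fun a (_ : a ∈ Finset.univ) => hPAC0 (a, c)) (Finset.mem_univ a)) (hPAC0 _)
        have : ∀ x : α × β, q (x, c) = 0 := by
          intro x
          show PAC (x.1, c) * PBC (x.2, c) / PC c = 0
          rw [hzero x.1, zero_mul, zero_div]
        rw [Finset.sum_congr rfl fun x _ => this x]
        simp [hc]
      · have : (∑ x : α × β, q (x, c)) = PC c := by
          calc ∑ x : α × β, q (x, c)
              = ∑ a, ∑ b, PAC (a, c) * PBC (b, c) / PC c := by
                rw [Fintype.sum_prod_type]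
            _ = ∑ a, PAC (a, c) * (∑ b, PBC (b, c)) / PC c := by
                refine Finset.sum_congr rfl fun a _ => ?_
                rw [Finset.mul_sum, Finset.sum_div]
            _ = ∑ a, PAC (a, c) * PC c / PC c := by
                rw [hSB c]
            _ = ∑ a, PAC (a, c) := by
                refine Finset.sum_congr rfl fun a _ => ?_
                rw [mul_div_assoc, div_self hc, mul_one]
            _ = PC c := hSA c
        exact this.le
    calc ∑ t : (α × β) × γ, q t = ∑ x : α × β, ∑ c, q (x, c) := Fintype.sum_prod_type _
      _ = ∑ c, ∑ x : α × β, q (x, c) := Finset.sum_comm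
      _ ≤ ∑ c, PC c := Finset.sum_le_sum fun c _ => hcol c
      _ = 1 := hPCsum
  -- cmi as a single sum
  have hcmi : cmi μ A B C = -∑ t, p t * Real.logb 2 (q t / p t) := by
    have hterm : ∀ t, -(p t * Real.logb 2 (PAC (t.1.1, t.2)))
        - p t * Real.logb 2 (PBC (t.1.2, t.2))
        + p t * Real.logb 2 (PC t.2) + p t * Real.logb 2 (p t)
        = -(p t * Real.logb 2 (q t / p t)) := by
      intro t
      rcases (hp0 t).lt_or_eq with h | h
      · have hA := lt_of_lt_of_le h (hlePAC t)
        have hB := lt_of_lt_of_le h (hlePBC t)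
        have hC := lt_of_lt_of_le h (hlePC t)
        have hqt : q t / p t = PAC (t.1.1, t.2) * PBC (t.1.2, t.2) / (PC t.2 * p t) := by
          show PAC (t.1.1, t.2) * PBC (t.1.2, t.2) / PC t.2 / p t = _
          rw [div_div]
        rw [hqt, Real.logb_div (by positivity) (by positivity),
          Real.logb_mul (ne_of_gt hA) (ne_of_gt hB),
          Real.logb_mul (ne_of_gt hC) (ne_of_gt h)]
        ring
      · rw [← h]; ring
    have hcmi2 : cmi μ A B C = ent μ (fun ω => (A ω, C ω)) + ent μ (fun ω => (B ω, C ω))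
        - ent μ C - ent μ T := by
      simp only [cmi, condent, hT]
      ring
    rw [hcmi2, eAC, eBC, eC, eT]
    have hsum : ∑ t, p t * Real.logb 2 (q t / p t)
        = ∑ t, (p t * Real.logb 2 (PAC (t.1.1, t.2)) + p t * Real.logb 2 (PBC (t.1.2, t.2))
          - p t * Real.logb 2 (PC t.2) - p t * Real.logb 2 (p t)) :=
      Finset.sum_congr rfl fun t _ => by have := hterm t; linarith
    rw [hsum, Finset.sum_sub_distrib, Finset.sum_sub_distrib, Finset.sum_add_distrib]
    ring
  rw [hcmi]
  have := gibbs p q hp0 hq0 hqpos hqsum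
  linarith

def res {β : Type*} {m : ℕ} (w : Fin (m + 1) → β) : Fin m → β :=
  fun j => w j.castSucc

def lst {β : Type*} {m : ℕ} (w : Fin (m + 1) → β) : β := w (Fin.last m)

def ext {β : Type*} {m : ℕ} (bv : β × (Fin m → β)) : Fin (m + 1) → β :=
  fun j => if h : j.1 < m then bv.2 ⟨j.1, h⟩ else bv.1

lemma res_pfx {β : Type*} {n : ℕ} (x : Fin n → β) (i : Fin n) :
    res (pfx x (i.1 + 1) i.isLt) = pfx x i.1 i.isLt.le := rfl

lemma lst_pfx {β : Type*} {n : ℕ} (x : Fin n → β) (i : Fin n) :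
    lst (pfx x (i.1 + 1) i.isLt) = x i := rfl

lemma ext_pfx {β : Type*} {n : ℕ} (x : Fin n → β) (i : Fin n) :
    ext (x i, pfx x i.1 i.isLt.le) = pfx x (i.1 + 1) i.isLt := by
  funext j
  show (if h : j.1 < i.1 then pfx x i.1 i.isLt.le ⟨j.1, h⟩ else x i) = _
  split_ifs with h
  · rfl
  · have hj : j.1 = i.1 := by omega
    show x i = x (Fin.castLE i.isLt j)
    exact congrArg x (Fin.ext hj.symm)

lemma Xdet {α ζ φ : Type*} {n : ℕ} (F : Ω → Fin n → φ) (X : Ω → Fin n → α)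
    (Z : Ω → Fin n → ζ)
    (hX : ∀ i : Fin n, ∃ g : (Fin (i.1 + 1) → φ) × (Fin i.1 → ζ) → α,
      ∀ ω, X ω i = g (pfx (F ω) (i.1 + 1) i.isLt, pfx (Z ω) i.1 i.isLt.le))
    (i : Fin n) :
    ∃ G : (Fin (i.1 + 1) → φ) × (Fin i.1 → ζ) → (Fin (i.1 + 1) → α),
      ∀ ω, pfx (X ω) (i.1 + 1) i.isLt
        = G (pfx (F ω) (i.1 + 1) i.isLt, pfx (Z ω) i.1 i.isLt.le) := by
  choose g hg using hX
  refine ⟨fun fz j =>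
    g ⟨j.1, lt_of_le_of_lt (Nat.lt_succ_iff.mp j.isLt) i.isLt⟩
      (fun k => fz.1 (Fin.castLE (Nat.succ_le_succ (Nat.lt_succ_iff.mp j.isLt)) k),
       fun k => fz.2 (Fin.castLE (Nat.lt_succ_iff.mp j.isLt) k)), ?_⟩
  intro ω
  funext j
  exact hg ⟨j.1, lt_of_le_of_lt (Nat.lt_succ_iff.mp j.isLt) i.isLt⟩ ω

/-- under the code-function setup of the previous lemma,
`I(Fⁿ; Yⁿ) ≤ I(Xⁿ → Yⁿ ‖ Zⁿ)`. -/
theorem stmt17 {Ω : Type*} [Fintype Ω] (μ : Ω → ℝ)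
    (hμ0 : ∀ ω, 0 ≤ μ ω) (hμ1 : ∑ ω, μ ω = 1)
    {α β ζ φ : Type*} [Fintype α] [DecidableEq α] [Fintype β] [DecidableEq β]
    [Fintype ζ] [DecidableEq ζ] [Fintype φ] [DecidableEq φ]
    {n : ℕ} (F : Ω → Fin n → φ) (X : Ω → Fin n → α) (Y : Ω → Fin n → β)
    (Z : Ω → Fin n → ζ)
    (hX : ∀ i : Fin n, ∃ g : (Fin (i.1 + 1) → φ) × (Fin i.1 → ζ) → α,
      ∀ ω, X ω i = g (pfx (F ω) (i.1 + 1) i.isLt, pfx (Z ω) i.1 i.isLt.le))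
    (hnofb : mi μ F (fun ω => (Y ω, Z ω))
      = ∑ i : Fin n, cmi μ (fun ω => pfx (F ω) (i.1 + 1) i.isLt)
          (fun ω => (Y ω i, Z ω i))
          (fun ω => (pfx (Y ω) i.1 i.isLt.le, pfx (Z ω) i.1 i.isLt.le)))
    (hfb : ∀ i : Fin n,
      condent μ (fun ω => Z ω i)
          (fun ω => (pfx (Y ω) (i.1 + 1) i.isLt, pfx (Z ω) i.1 i.isLt.le,
            pfx (F ω) (i.1 + 1) i.isLt))
      = condent μ (fun ω => Z ω i)
          (fun ω => (pfx (Y ω) (i.1 + 1) i.isLt, pfx (Z ω) i.1 i.isLt.le)))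
    (hch : ∀ i : Fin n,
      condent μ (fun ω => Y ω i)
          (fun ω => (pfx (Y ω) i.1 i.isLt.le, pfx (X ω) (i.1 + 1) i.isLt,
            pfx (Z ω) i.1 i.isLt.le, pfx (F ω) (i.1 + 1) i.isLt))
      = condent μ (fun ω => Y ω i)
          (fun ω => (pfx (Y ω) i.1 i.isLt.le, pfx (X ω) (i.1 + 1) i.isLt,
            pfx (Z ω) i.1 i.isLt.le))) :
    mi μ F Y ≤ dirinfoCausal μ X Y Z := by
  have hstep : ∀ i : Fin n,
      cmi μ (fun ω => pfx (F ω) (i.1 + 1) i.isLt)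
          (fun ω => (Y ω i, Z ω i))
          (fun ω => (pfx (Y ω) i.1 i.isLt.le, pfx (Z ω) i.1 i.isLt.le))
      = cmi μ (fun ω => pfx (X ω) (i.1 + 1) i.isLt)
          (fun ω => Y ω i)
          (fun ω => (pfx (Y ω) i.1 i.isLt.le, pfx (Z ω) i.1 i.isLt.le)) := by
    intro i
    obtain ⟨G, hG⟩ := Xdet F X Z hX i
    have hfbi : ent μ (fun ω => (Z ω i, (pfx (Y ω) (i.1 + 1) i.isLt,
          pfx (Z ω) i.1 i.isLt.le, pfx (F ω) (i.1 + 1) i.isLt)))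
        - ent μ (fun ω => (pfx (Y ω) (i.1 + 1) i.isLt,
          pfx (Z ω) i.1 i.isLt.le, pfx (F ω) (i.1 + 1) i.isLt))
        = ent μ (fun ω => (Z ω i, (pfx (Y ω) (i.1 + 1) i.isLt, pfx (Z ω) i.1 i.isLt.le)))
        - ent μ (fun ω => (pfx (Y ω) (i.1 + 1) i.isLt, pfx (Z ω) i.1 i.isLt.le)) := hfb i
    have hchi : ent μ (fun ω => (Y ω i, (pfx (Y ω) i.1 i.isLt.le,
          pfx (X ω) (i.1 + 1) i.isLt, pfx (Z ω) i.1 i.isLt.le, pfx (F ω) (i.1 + 1) i.isLt)))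
        - ent μ (fun ω => (pfx (Y ω) i.1 i.isLt.le,
          pfx (X ω) (i.1 + 1) i.isLt, pfx (Z ω) i.1 i.isLt.le, pfx (F ω) (i.1 + 1) i.isLt))
        = ent μ (fun ω => (Y ω i, (pfx (Y ω) i.1 i.isLt.le,
          pfx (X ω) (i.1 + 1) i.isLt, pfx (Z ω) i.1 i.isLt.le)))
        - ent μ (fun ω => (pfx (Y ω) i.1 i.isLt.le,
          pfx (X ω) (i.1 + 1) i.isLt, pfx (Z ω) i.1 i.isLt.le)) := hch i
    simp only [cmi, condent]
    -- e1 : c1 = a4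
    have e1 : ent μ (fun ω => (Z ω i, (pfx (Y ω) (i.1 + 1) i.isLt,
          pfx (Z ω) i.1 i.isLt.le, pfx (F ω) (i.1 + 1) i.isLt)))
        = ent μ (fun ω => ((pfx (F ω) (i.1 + 1) i.isLt, (Y ω i, Z ω i)),
          (pfx (Y ω) i.1 i.isLt.le, pfx (Z ω) i.1 i.isLt.le))) :=
      ent_eq μ _ _
        (fun u => ((u.2.2.2, (lst u.2.1, u.1)), (res u.2.1, u.2.2.1)))
        (fun v => (v.1.2.2, (ext (v.1.2.1, v.2.1), (v.2.2, v.1.1))))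
        (fun ω => by simp only [lst_pfx, res_pfx])
        (fun ω => by simp only [ext_pfx])
    -- e2 : c3 = a2
    have e2 : ent μ (fun ω => (Z ω i, (pfx (Y ω) (i.1 + 1) i.isLt,
          pfx (Z ω) i.1 i.isLt.le)))
        = ent μ (fun ω => ((Y ω i, Z ω i),
          (pfx (Y ω) i.1 i.isLt.le, pfx (Z ω) i.1 i.isLt.le))) :=
      ent_eq μ _ _
        (fun u => ((lst u.2.1, u.1), (res u.2.1, u.2.2)))
        (fun v => (v.1.2, (ext (v.1.1, v.2.1), v.2.2)))
        (fun ω => by simp only [lst_pfx, res_pfx])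
        (fun ω => by simp only [ext_pfx])
    -- e3 : c4 = b2
    have e3 : ent μ (fun ω => (pfx (Y ω) (i.1 + 1) i.isLt, pfx (Z ω) i.1 i.isLt.le))
        = ent μ (fun ω => (Y ω i,
          (pfx (Y ω) i.1 i.isLt.le, pfx (Z ω) i.1 i.isLt.le))) :=
      ent_eq μ _ _
        (fun u => (lst u.1, (res u.1, u.2)))
        (fun v => (ext (v.1, v.2.1), v.2.2))
        (fun ω => by simp only [lst_pfx, res_pfx])
        (fun ω => by simp only [ext_pfx])
    -- e4 : c2 = d1
    have e4 : ent μ (fun ω => (pfx (Y ω) (i.1 + 1) i.isLt,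
          pfx (Z ω) i.1 i.isLt.le, pfx (F ω) (i.1 + 1) i.isLt))
        = ent μ (fun ω => (Y ω i, (pfx (Y ω) i.1 i.isLt.le,
          pfx (X ω) (i.1 + 1) i.isLt, pfx (Z ω) i.1 i.isLt.le,
          pfx (F ω) (i.1 + 1) i.isLt))) :=
      ent_eq μ _ _
        (fun u => (lst u.1, (res u.1, (G (u.2.2, u.2.1), (u.2.1, u.2.2)))))
        (fun v => (ext (v.1, v.2.1), (v.2.2.2.1, v.2.2.2.2)))
        (fun ω => by simp only [lst_pfx, res_pfx, hG ω])
        (fun ω => by simp only [ext_pfx])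
    -- e5 : d2 = a1
    have e5 : ent μ (fun ω => (pfx (Y ω) i.1 i.isLt.le,
          pfx (X ω) (i.1 + 1) i.isLt, pfx (Z ω) i.1 i.isLt.le,
          pfx (F ω) (i.1 + 1) i.isLt))
        = ent μ (fun ω => (pfx (F ω) (i.1 + 1) i.isLt,
          (pfx (Y ω) i.1 i.isLt.le, pfx (Z ω) i.1 i.isLt.le))) :=
      ent_eq μ _ _
        (fun u => (u.2.2.2, (u.1, u.2.2.1)))
        (fun v => (v.2.1, (G (v.1, v.2.2), (v.2.2, v.1))))
        (fun ω => rfl)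
        (fun ω => by simp only [hG ω])
    -- e6 : d3 = b4
    have e6 : ent μ (fun ω => (Y ω i, (pfx (Y ω) i.1 i.isLt.le,
          pfx (X ω) (i.1 + 1) i.isLt, pfx (Z ω) i.1 i.isLt.le)))
        = ent μ (fun ω => ((pfx (X ω) (i.1 + 1) i.isLt, Y ω i),
          (pfx (Y ω) i.1 i.isLt.le, pfx (Z ω) i.1 i.isLt.le))) :=
      ent_eq μ _ _
        (fun u => ((u.2.2.1, u.1), (u.2.1, u.2.2.2)))
        (fun v => (v.1.2, (v.2.1, (v.1.1, v.2.2))))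
        (fun ω => rfl) (fun ω => rfl)
    -- e7 : d4 = b1
    have e7 : ent μ (fun ω => (pfx (Y ω) i.1 i.isLt.le,
          pfx (X ω) (i.1 + 1) i.isLt, pfx (Z ω) i.1 i.isLt.le))
        = ent μ (fun ω => (pfx (X ω) (i.1 + 1) i.isLt,
          (pfx (Y ω) i.1 i.isLt.le, pfx (Z ω) i.1 i.isLt.le))) :=
      ent_eq μ _ _
        (fun u => (u.2.1, (u.1, u.2.2)))
        (fun v => (v.2.1, (v.1, v.2.2)))
        (fun ω => rfl) (fun ω => rfl)
    linarith [e1, e2, e3, e4, e5, e6, e7, hfbi, hchi]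
  have h1 : mi μ F Y ≤ mi μ F (fun ω => (Y ω, Z ω)) := by
    have hc := cmi_nonneg μ hμ0 hμ1 F Z Y
    have heq1 : ent μ (fun ω => (Z ω, Y ω)) = ent μ (fun ω => (Y ω, Z ω)) :=
      ent_eq μ _ _ Prod.swap Prod.swap (fun ω => rfl) (fun ω => rfl)
    have heq2 : ent μ (fun ω => ((F ω, Z ω), Y ω))
        = ent μ (fun ω => (F ω, (Y ω, Z ω))) :=
      ent_eq μ _ _ (fun u => (u.1.1, (u.2, u.1.2)))
        (fun v => ((v.1, v.2.2), v.2.1)) (fun ω => rfl) (fun ω => rfl)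
    simp only [cmi, condent, mi] at hc ⊢
    linarith
  calc mi μ F Y ≤ mi μ F (fun ω => (Y ω, Z ω)) := h1
    _ = ∑ i : Fin n, cmi μ (fun ω => pfx (F ω) (i.1 + 1) i.isLt)
          (fun ω => (Y ω i, Z ω i))
          (fun ω => (pfx (Y ω) i.1 i.isLt.le, pfx (Z ω) i.1 i.isLt.le)) := hnofb
    _ = ∑ i : Fin n, cmi μ (fun ω => pfx (X ω) (i.1 + 1) i.isLt)
          (fun ω => Y ω i)
          (fun ω => (pfx (Y ω) i.1 i.isLt.le, pfx (Z ω) i.1 i.isLt.le)) :=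
        Finset.sum_congr rfl fun i _ => hstep i
    _ = dirinfoCausal μ X Y Z := rfl

end NFB
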